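/- (Structural conditions for threshold optimality.) For the AoI chain, define the tail transition probability T(z | s, a) := Pr(next state ≥ z | current state s, action a) for z, s ∈ {1,…,S} and a ∈ {0,1}. Then: (i) for every fixed z and a, T(z | s, a) is nondecreasing in s; and (ii) for every z ∈ {1,…,S} and every s ∈ {1,…,S−1}, T(z | s+1, 1) − T(z | s, 1) ≤ T(z | s+1, 0) − T(z | s, 0). -/
import Mathlib


open Finset

/-- Tail transition probability T(z | s, a) = Pr(next state ≥ z | s, a) of the
AoI chain: under a = 1 the next state is 1 w.p. ρ and min(s+1,S) w.p. 1-ρ;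
under a = 0 it is min(s+1,S). -/
noncomputable def Tker (S : ℕ) (ρ : ℝ) (z s a : ℕ) : ℝ :=
  if a = 1 then
    ρ * (if 1 ≥ z then 1 else 0) + (1 - ρ) * (if min (s + 1) S ≥ z then 1 else 0)
  else (if min (s + 1) S ≥ z then 1 else 0)

/-- Structural conditions for threshold optimality:
(i) T(z|s,a) is nondecreasing in s; (ii) superadditivity-type inequality
T(z|s+1,1) − T(z|s,1) ≤ T(z|s+1,0) − T(z|s,0). -/
theorem tail_kernel_structural_conditions
    (S : ℕ) (hS : 2 ≤ S) (ρ : ℝ) (hρ0 : 0 < ρ) (hρ1 : ρ ≤ 1) :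
    (∀ z ∈ Finset.Icc 1 S, ∀ a ∈ ({0, 1} : Finset ℕ),
      ∀ s ∈ Finset.Icc 1 S, ∀ s' ∈ Finset.Icc 1 S,
        s ≤ s' → Tker S ρ z s a ≤ Tker S ρ z s' a) ∧
    (∀ z ∈ Finset.Icc 1 S, ∀ s ∈ Finset.Icc 1 (S - 1),
      Tker S ρ z (s + 1) 1 - Tker S ρ z s 1 ≤
        Tker S ρ z (s + 1) 0 - Tker S ρ z s 0) := by
  have hind : ∀ z s s' : ℕ, s ≤ s' →
      ((if min (s + 1) S ≥ z then (1:ℝ) else 0) ≤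
        if min (s' + 1) S ≥ z then 1 else 0) := by
    intro z s s' h
    by_cases h1 : min (s + 1) S ≥ z
    · have h2 : min (s' + 1) S ≥ z :=
        le_trans h1 (min_le_min (by omega) le_rfl)
      simp [h1, h2]
    · simp [h1]
      split <;> norm_num
  constructor
  · intro z _ a _ s _ s' _ hss
    unfold Tker
    by_cases ha : a = 1
    · subst ha
      simp only [Tker, if_pos rfl, ite_true]
      have := hind z s s' hss
      nlinarith
    · simp only [ha, if_neg ha]
      exact hind z s s' hss
  · intro z _ s _
    simp only [Tker, ite_true, show (0:ℕ) ≠ 1 by norm_num, if_false, if_pos rfl]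
    have := hind z s (s + 1) (by omega)
    nlinarith
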